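/- For all positive integers n and k, and any x, (-1)^n Ch_n^{(k)}(x)/n! = Σ_{m=1}^{n} binomial(n-1, n-m) Ĉh_m^{(k)}(-x)/m!. -/

import Mathlib

open PowerSeries Finset

/-- Higher-order Changhee numbers of the first kind. -/
noncomputable def Ch (k n : ℕ) : ℚ := (-1/2)^n * n.factorial * ((n+k-1).choose n)

/-- Signed Stirling numbers of the first kind, via coefficients of the falling factorial. -/
noncomputable def stirling1 (n l : ℕ) : ℚ :=
  (∏ i ∈ Finset.range n, (Polynomial.X - (i : Polynomial ℚ))).coeff l

/-- Stirling numbers of the second kind, via (e^t-1)^n = n! Σ S₂(m,n) t^m/m!. -/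
noncomputable def stirling2 (m n : ℕ) : ℚ :=
  (m.factorial : ℚ) / n.factorial * PowerSeries.coeff m ((PowerSeries.exp ℚ - 1)^n)

/-- Higher-order Euler numbers, from (2/(e^t+1))^k. -/
noncomputable def EulerN (k l : ℕ) : ℚ :=
  l.factorial * PowerSeries.coeff l ((2 * (PowerSeries.exp ℚ + 1)⁻¹)^k)

/-- Higher-order Euler polynomials, from (2/(e^t+1))^k e^{xt}. -/
noncomputable def EulerP (k : ℕ) (x : ℚ) (l : ℕ) : ℚ :=
  l.factorial * PowerSeries.coeff l
    ((2 * (PowerSeries.exp ℚ + 1)⁻¹)^k * PowerSeries.rescale x (PowerSeries.exp ℚ))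

/-- Generalized binomial coefficient. -/
noncomputable def gbinom (x : ℚ) (m : ℕ) : ℚ := (∏ i ∈ Finset.range m, (x - i)) / m.factorial

/-- Binomial series (1+t)^x. -/
noncomputable def onePlusXPow (x : ℚ) : PowerSeries ℚ := PowerSeries.mk fun m => gbinom x m

/-- Higher-order Changhee polynomials of the first kind, from (2/(2+t))^k (1+t)^x. -/
noncomputable def ChP (k : ℕ) (x : ℚ) (n : ℕ) : ℚ :=
  n.factorial * PowerSeries.coeff n
    ((2 * (2 + PowerSeries.X : PowerSeries ℚ)⁻¹)^k * onePlusXPow x)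

/-- Higher-order Changhee numbers of the second kind, from (2/(2+t))^k (1+t)^k. -/
noncomputable def ChhN (k n : ℕ) : ℚ :=
  n.factorial * PowerSeries.coeff n
    ((2 * (2 + PowerSeries.X : PowerSeries ℚ)⁻¹)^k * (1 + PowerSeries.X)^k)

/-- Higher-order Changhee polynomials of the second kind, from (2/(2+t))^k (1+t)^{x+k}. -/
noncomputable def ChP2 (k : ℕ) (x : ℚ) (n : ℕ) : ℚ :=
  n.factorial * PowerSeries.coeff n
    ((2 * (2 + PowerSeries.X : PowerSeries ℚ)⁻¹)^k * onePlusXPow (x + k))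

lemma fact_ne (m : ℕ) : (m.factorial : ℚ) ≠ 0 := by exact_mod_cast m.factorial_ne_zero

lemma gbinom_zero (x : ℚ) : gbinom x 0 = 1 := by simp [gbinom]

lemma gbinom_pascal (x : ℚ) (m : ℕ) :
    gbinom (x+1) (m+1) = gbinom x (m+1) + gbinom x m := by
  unfold gbinom
  rw [prod_range_succ' (fun i => x + 1 - (i:ℚ)), prod_range_succ (fun i => x - (i:ℚ))]
  have h1 : ∀ i : ℕ, x + 1 - ((i+1 : ℕ):ℚ) = x - i := by intro i; push_cast; ring
  simp only [h1, Nat.cast_zero, sub_zero, Nat.factorial_succ]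
  have h2 := fact_ne m
  have h3 : ((m+1 : ℕ):ℚ) ≠ 0 := by positivity
  field_simp
  push_cast
  ring

lemma gbinom_succ (x : ℚ) (N : ℕ) :
    ((N:ℚ)+1) * gbinom x (N+1) = (x - N) * gbinom x N := by
  unfold gbinom
  rw [prod_range_succ (fun i => x - (i:ℚ)), Nat.factorial_succ]
  have h2 := fact_ne N
  have h3 : ((N+1 : ℕ):ℚ) ≠ 0 := by positivity
  push_cast
  field_simp

lemma gbinom_reflect (x : ℚ) (m : ℕ) : (-1)^m * gbinom x m = gbinom ((m:ℚ) - 1 - x) m := by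
  unfold gbinom
  rw [mul_div_assoc']
  congr 1
  have h1 : (-1:ℚ)^m * ∏ i ∈ range m, (x - i) = ∏ i ∈ range m, ((i:ℚ) - x) := by
    have h0 : (-1:ℚ)^m = ∏ _i ∈ range m, (-1:ℚ) := by simp
    rw [h0, ← Finset.prod_mul_distrib]
    exact Finset.prod_congr rfl (fun i _ => by ring)
  rw [h1, ← Finset.prod_range_reflect (fun j => (j:ℚ) - x) m]
  refine Finset.prod_congr rfl (fun j hj => ?_)
  rw [mem_range] at hj
  have hj' : j ≤ m - 1 := by omega
  have hm : 1 ≤ m := by omega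
  rw [Nat.cast_sub hj', Nat.cast_sub hm]
  push_cast
  ring

lemma gbinom_nat_aux (s a : ℕ) (h : s ≤ a) :
    ((a - s).factorial : ℚ) * ∏ i ∈ range s, ((a:ℚ) - i) = a.factorial := by
  induction s with
  | zero => simp
  | succ t ih =>
    have ht : t ≤ a := by omega
    rw [prod_range_succ, ← mul_assoc]
    have h3 : ((a - t).factorial : ℚ) = ((a:ℚ) - t) * ((a - (t+1)).factorial : ℚ) := by
      have h2 : a - t = a - (t+1) + 1 := by omega
      rw [h2, Nat.factorial_succ]
      push_cast [Nat.cast_sub h]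
      ring
    calc ((a - (t+1)).factorial : ℚ) * (∏ i ∈ range t, ((a:ℚ) - i)) * ((a:ℚ) - t)
        = (((a:ℚ) - t) * ((a - (t+1)).factorial : ℚ)) * (∏ i ∈ range t, ((a:ℚ) - i)) := by ring
      _ = ((a - t).factorial : ℚ) * (∏ i ∈ range t, ((a:ℚ) - i)) := by rw [← h3]
      _ = a.factorial := ih ht

lemma gbinom_nat (a s : ℕ) : gbinom (a:ℚ) s = a.choose s := by
  unfold gbinom
  by_cases h : s ≤ a
  · rw [Nat.cast_choose ℚ h]
    have h4 := gbinom_nat_aux s a h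
    rw [div_eq_div_iff (fact_ne s) (by positivity), ← h4]
    ring
  · push_neg at h
    rw [Nat.choose_eq_zero_of_lt h]
    have hz : ((a:ℚ) - (a:ℕ)) = 0 := by simp
    rw [Finset.prod_eq_zero (Finset.mem_range.mpr h) hz]
    simp

lemma gbinom_vandermonde (x y : ℚ) (N : ℕ) :
    gbinom (x+y) N = ∑ s ∈ range (N+1), gbinom x s * gbinom y (N - s) := by
  induction N with
  | zero => simp [gbinom]
  | succ N ih =>
    have hN1 : ((N:ℚ)+1) ≠ 0 := by positivity
    have key : ((N:ℚ)+1) * ∑ s ∈ range (N+2), gbinom x s * gbinom y (N+1-s)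
        = (x + y - N) * ∑ s ∈ range (N+1), gbinom x s * gbinom y (N-s) := by
      rw [Finset.mul_sum, Finset.mul_sum]
      have exp : ∀ s ∈ range (N+1), (x + y - (N:ℚ)) * (gbinom x s * gbinom y (N-s))
          = ((s:ℚ)+1) * gbinom x (s+1) * gbinom y (N-s)
            + (((N-s:ℕ):ℚ)+1) * gbinom y ((N-s)+1) * gbinom x s := by
        intro s hs
        rw [mem_range] at hs
        have hsN : s ≤ N := by omega
        have hc : ((N-s:ℕ):ℚ) = (N:ℚ) - s := by rw [Nat.cast_sub hsN]
        have e1 := gbinom_succ x s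
        have e2 := gbinom_succ y (N-s)
        calc (x + y - (N:ℚ)) * (gbinom x s * gbinom y (N-s))
            = (x - s) * gbinom x s * gbinom y (N-s)
              + (y - ((N-s:ℕ):ℚ)) * gbinom y (N-s) * gbinom x s := by rw [hc]; ring
          _ = _ := by rw [← e1, ← e2]
      rw [Finset.sum_congr rfl exp, Finset.sum_add_distrib]
      have hS1 : ∑ s ∈ range (N+1), ((s:ℚ)+1) * gbinom x (s+1) * gbinom y (N-s)
          = ∑ s ∈ range (N+2), (s:ℚ) * gbinom x s * gbinom y (N+1-s) := by
        rw [Finset.sum_range_succ' (fun s => (s:ℚ) * gbinom x s * gbinom y (N+1-s)) (N+1)]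
        simp only [Nat.cast_zero, zero_mul, add_zero, Nat.cast_add, Nat.cast_one]
        refine Finset.sum_congr rfl (fun s hs => ?_)
        have : N + 1 - (s+1) = N - s := by omega
        rw [this]
      have hS2 : ∑ s ∈ range (N+1), (((N-s:ℕ):ℚ)+1) * gbinom y ((N-s)+1) * gbinom x s
          = ∑ s ∈ range (N+2), ((N+1-s:ℕ):ℚ) * gbinom x s * gbinom y (N+1-s) := by
        rw [Finset.sum_range_succ (fun s => ((N+1-s:ℕ):ℚ) * gbinom x s * gbinom y (N+1-s)) (N+1)]
        simp only [Nat.sub_self, Nat.cast_zero, zero_mul, add_zero]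
        refine Finset.sum_congr rfl (fun s hs => ?_)
        rw [mem_range] at hs
        have h5 : (N-s)+1 = N+1-s := by omega
        have h6 : ((N+1-s:ℕ):ℚ) = ((N-s:ℕ):ℚ)+1 := by
          rw [Nat.cast_sub (by omega), Nat.cast_sub (by omega)]; push_cast; ring
        rw [h5, h6]; ring
      rw [hS1, hS2, ← Finset.sum_add_distrib]
      refine Finset.sum_congr rfl (fun s hs => ?_)
      rw [mem_range] at hs
      have h7 : ((N+1-s:ℕ):ℚ) = (N:ℚ)+1-s := by rw [Nat.cast_sub (by omega)]; push_cast; ring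
      rw [h7]; ring
    have h8 := gbinom_succ (x+y) N
    apply mul_left_cancel₀ hN1
    rw [h8, ih, key]

noncomputable def mkp (k : ℕ) : PowerSeries ℚ :=
  PowerSeries.mk fun j => (-1/2:ℚ)^j * ((j + k - 1).choose j)

lemma two_eq_C : (2:ℚ⟦X⟧) = C 2 := (map_ofNat C 2).symm

lemma coeff_two_mul (f : PowerSeries ℚ) (n : ℕ) : coeff n (2*f) = 2 * coeff n f := by
  rw [two_eq_C, coeff_C_mul]

lemma mkp_step (k : ℕ) : (2 + PowerSeries.X) * mkp (k+1) = 2 * mkp k := by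
  ext n
  rw [add_mul]
  cases n with
  | zero =>
    rw [map_add, coeff_two_mul, coeff_two_mul, coeff_zero_X_mul]
    simp [mkp]
  | succ m =>
    rw [map_add, coeff_two_mul, coeff_two_mul, coeff_succ_X_mul]
    simp only [mkp, coeff_mk]
    have e1 : m + 1 + (k+1) - 1 = (m + k) + 1 := by omega
    have e2 : m + (k+1) - 1 = m + k := by omega
    have e3 : m + 1 + k - 1 = m + k := by omega
    rw [e1, e2, e3, Nat.choose_succ_succ (m+k) m]
    push_cast
    ring

lemma mkp_mul (k : ℕ) : mkp k * (2 + PowerSeries.X)^k = 2^k := by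
  induction k with
  | zero =>
    simp only [pow_zero, mul_one]
    ext n
    cases n with
    | zero => simp [mkp]
    | succ m =>
      simp [mkp, Nat.choose_eq_zero_of_lt (show m + 1 + 0 - 1 < m + 1 by omega)]
  | succ k ih =>
    rw [pow_succ, show mkp (k+1) * ((2 + PowerSeries.X)^k * (2+PowerSeries.X))
        = ((2+PowerSeries.X) * mkp (k+1)) * (2+PowerSeries.X)^k by ring,
      mkp_step, show (2:ℚ⟦X⟧) * mkp k * (2+PowerSeries.X)^k = 2 * (mkp k * (2+PowerSeries.X)^k) by ring,
      ih, pow_succ]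
    ring

lemma constC : constantCoeff (2 + PowerSeries.X : ℚ⟦X⟧) = 2 := by
  rw [map_add, constantCoeff_X, two_eq_C, constantCoeff_C, add_zero]

lemma pow_eq_mkp (k : ℕ) : (2 * (2 + PowerSeries.X : PowerSeries ℚ)⁻¹)^k = mkp k := by
  have hC : constantCoeff (2 + PowerSeries.X : ℚ⟦X⟧) ≠ 0 := by rw [constC]; norm_num
  have hu : (2 + PowerSeries.X : ℚ⟦X⟧) * (2 + PowerSeries.X)⁻¹ = 1 :=
    PowerSeries.mul_inv_cancel _ hC
  have hne : ((2 + PowerSeries.X : ℚ⟦X⟧))^k ≠ 0 := pow_ne_zero _ (fun h => hC (by rw [h]; simp))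
  apply mul_right_cancel₀ hne
  rw [mkp_mul, ← mul_pow]
  have h9 : (2 * (2 + PowerSeries.X : ℚ⟦X⟧)⁻¹) * (2 + PowerSeries.X) = 2 := by
    rw [mul_assoc, mul_comm ((2 + PowerSeries.X : ℚ⟦X⟧)⁻¹), hu, mul_one]
  rw [h9]

lemma coeff_formula (k n : ℕ) (z : ℚ) :
    coeff n ((2 * (2 + PowerSeries.X : PowerSeries ℚ)⁻¹)^k * onePlusXPow z)
      = ∑ j ∈ range (n+1), (-1/2:ℚ)^j * ((j+k-1).choose j) * gbinom z (n-j) := by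
  rw [pow_eq_mkp, PowerSeries.coeff_mul, Finset.Nat.sum_antidiagonal_eq_sum_range_succ_mk]
  simp [mkp, onePlusXPow]

lemma helper1 (c : ℚ) (k n : ℕ) (y : ℚ) :
    ∑ j ∈ range (n+2), c^j * ((j+k).choose j) * gbinom (y - j) (n+1-j)
    = ∑ j ∈ range (n+2), c^j * ((j+k-1).choose j) * gbinom (y - j) (n+1-j)
      + c * ∑ j ∈ range (n+1), c^j * ((j+k).choose j) * gbinom ((y-1) - j) (n-j) := by
  rw [Finset.sum_range_succ' (fun j => c^j * ((j+k).choose j) * gbinom (y - j) (n+1-j)) (n+1),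
    Finset.sum_range_succ' (fun j => c^j * ((j+k-1).choose j) * gbinom (y - j) (n+1-j)) (n+1),
    Finset.mul_sum]
  have h0 : (c^0 * (((0:ℕ)+k).choose 0) * gbinom (y - (0:ℕ)) (n+1-0))
      = (c^0 * (((0:ℕ)+k-1).choose 0) * gbinom (y - (0:ℕ)) (n+1-0)) := by
    simp
  rw [add_assoc, add_comm (c^0 * (((0:ℕ)+k-1).choose 0) * gbinom (y - (0:ℕ)) (n+1-0)), ← add_assoc,
    ← Finset.sum_add_distrib]
  rw [h0]
  congr 1
  refine Finset.sum_congr rfl (fun j hj => ?_)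
  have e1 : n + 1 - (j+1) = n - j := by omega
  have e2 : j + 1 + k - 1 = j + k := by omega
  have e3 : y - ((j+1:ℕ):ℚ) = (y - 1) - (j:ℚ) := by push_cast; ring
  have e4 : j + 1 + k = (j + k) + 1 := by omega
  rw [e1, e2, e3, e4, Nat.choose_succ_succ (j+k) j]
  push_cast
  ring

lemma helper2 (c : ℚ) (k n : ℕ) (z : ℚ) :
    ∑ j ∈ range (n+2), c^j * ((j+k).choose j) * gbinom (z+1) (n+1-j)
    = ∑ j ∈ range (n+2), c^j * ((j+k-1).choose j) * gbinom z (n+1-j)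
      + (1+c) * ∑ j ∈ range (n+1), c^j * ((j+k).choose j) * gbinom z (n-j) := by
  have A2eq : ∑ j ∈ range (n+2), c^j * ((j+k).choose j) * gbinom z (n+1-j)
      = ∑ j ∈ range (n+2), c^j * ((j+k-1).choose j) * gbinom z (n+1-j)
        + c * ∑ j ∈ range (n+1), c^j * ((j+k).choose j) * gbinom z (n-j) := by
    rw [Finset.sum_range_succ' (fun j => c^j * ((j+k).choose j) * gbinom z (n+1-j)) (n+1),
      Finset.sum_range_succ' (fun j => c^j * ((j+k-1).choose j) * gbinom z (n+1-j)) (n+1),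
      Finset.mul_sum]
    have h0 : (c^0 * (((0:ℕ)+k).choose 0) * gbinom z (n+1-0))
        = (c^0 * (((0:ℕ)+k-1).choose 0) * gbinom z (n+1-0)) := by simp
    rw [add_assoc, add_comm (c^0 * (((0:ℕ)+k-1).choose 0) * gbinom z (n+1-0)), ← add_assoc,
      ← Finset.sum_add_distrib, h0]
    congr 1
    refine Finset.sum_congr rfl (fun j hj => ?_)
    have e1 : n + 1 - (j+1) = n - j := by omega
    have e2 : j + 1 + k - 1 = j + k := by omega
    have e4 : j + 1 + k = (j + k) + 1 := by omega
    rw [e1, e2, e4, Nat.choose_succ_succ (j+k) j]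
    push_cast
    ring
  have split : ∑ j ∈ range (n+2), c^j * ((j+k).choose j) * gbinom (z+1) (n+1-j)
      = ∑ j ∈ range (n+2), c^j * ((j+k).choose j) * gbinom z (n+1-j)
        + ∑ j ∈ range (n+1), c^j * ((j+k).choose j) * gbinom z (n-j) := by
    rw [Finset.sum_range_succ (fun j => c^j * ((j+k).choose j) * gbinom (z+1) (n+1-j)) (n+1),
      Finset.sum_range_succ (fun j => c^j * ((j+k).choose j) * gbinom z (n+1-j)) (n+1)]
    have hz : gbinom (z+1) (n+1-(n+1)) = gbinom z (n+1-(n+1)) := by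
      simp [gbinom_zero]
    rw [hz]
    have key : ∑ j ∈ range (n+1), c^j * ((j+k).choose j) * gbinom (z+1) (n+1-j)
        = ∑ j ∈ range (n+1), (c^j * ((j+k).choose j) * gbinom z (n+1-j)
            + c^j * ((j+k).choose j) * gbinom z (n-j)) := by
      refine Finset.sum_congr rfl (fun j hj => ?_)
      rw [mem_range] at hj
      have e5 : n + 1 - j = (n - j) + 1 := by omega
      rw [e5, gbinom_pascal z (n-j)]
      ring
    rw [key, Finset.sum_add_distrib]
    ring
  rw [split, A2eq]
  ring

lemma masterlemma : ∀ (n k : ℕ) (y : ℚ),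
    ∑ j ∈ range (n+1), (1/2:ℚ)^j * ((j+k-1).choose j) * gbinom (y - j) (n-j)
    = ∑ j ∈ range (n+1), (-1/2:ℚ)^j * ((j+k-1).choose j) * gbinom (y + k) (n-j) := by
  intro n
  induction n with
  | zero =>
    intro k y
    simp [gbinom_zero]
  | succ n ihn =>
    intro k
    induction k with
    | zero =>
      intro y
      refine Finset.sum_congr rfl (fun j hj => ?_)
      cases j with
      | zero => simp
      | succ i =>
        have : (i + 1 + 0 - 1).choose (i+1) = 0 := Nat.choose_eq_zero_of_lt (by omega)
        rw [this]
        push_cast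
        ring
    | succ k ihk =>
      intro y
      have ee : ∀ j : ℕ, j + (k+1) - 1 = j + k := fun j => by omega
      simp only [ee]
      have h1 := helper1 (1/2 : ℚ) k n y
      have hz : y + ((k:ℚ)+1) = (y + k) + 1 := by ring
      have hcast : ∀ j ∈ range (n+2), (-1/2:ℚ)^j * ((j+k).choose j) * gbinom (y + ((k+1:ℕ):ℚ)) (n+1-j)
          = (-1/2:ℚ)^j * ((j+k).choose j) * gbinom ((y + k) + 1) (n+1-j) := by
        intro j _
        push_cast
        rw [hz]
      rw [h1, Finset.sum_congr rfl hcast, helper2 (-1/2 : ℚ) k n (y + k)]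
      have h2 := ihk y
      rw [h2]
      have h3 := ihn (k+1) (y - 1)
      simp only [ee] at h3
      have h4 : ∀ j ∈ range (n+1), (-1/2:ℚ)^j * ((j+k).choose j) * gbinom ((y-1) + ((k+1:ℕ):ℚ)) (n-j)
          = (-1/2:ℚ)^j * ((j+k).choose j) * gbinom (y + k) (n-j) := by
        intro j _
        have : (y-1) + ((k+1:ℕ):ℚ) = y + k := by push_cast; ring
        rw [this]
      rw [h3, Finset.sum_congr rfl h4]
      norm_num

theorem changhee_poly_inversion (n k : ℕ) (hn : 0 < n) (hk : 0 < k) (x : ℚ) :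
    (-1)^n * ChP k x n / n.factorial =
      ∑ m ∈ Finset.Icc 1 n, ((n-1).choose (n-m) : ℚ) * ChP2 k (-x) m / m.factorial := by
  have hn1 : 1 ≤ n := hn
  have hChP : ChP k x n / n.factorial
      = ∑ j ∈ range (n+1), (-1/2:ℚ)^j * ((j+k-1).choose j) * gbinom x (n-j) := by
    unfold ChP
    rw [mul_div_cancel_left₀ _ (fact_ne n)]
    exact coeff_formula k n x
  have hChP2 : ∀ m, ChP2 k (-x) m / m.factorial
      = ∑ j ∈ range (m+1), (-1/2:ℚ)^j * ((j+k-1).choose j) * gbinom (-x + k) (m-j) := by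
    intro m
    unfold ChP2
    rw [mul_div_cancel_left₀ _ (fact_ne m)]
    exact coeff_formula k m (-x + k)
  rw [mul_div_assoc, hChP, Finset.mul_sum]
  have hL : ∑ j ∈ range (n+1), (-1:ℚ)^n * ((-1/2:ℚ)^j * (((j+k-1).choose j):ℚ) * gbinom x (n-j))
      = ∑ j ∈ range (n+1), (1/2:ℚ)^j * (((j+k-1).choose j):ℚ) * gbinom (((n:ℚ) - 1 - x) - j) (n-j) := by
    refine Finset.sum_congr rfl (fun j hj => ?_)
    rw [mem_range] at hj
    have hjn : j ≤ n := by omega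
    have hsgn : (-1:ℚ)^n * (-1/2:ℚ)^j = (1/2:ℚ)^j * (-1:ℚ)^(n-j) := by
      have hs1 : (-1:ℚ)^(n-j) * (-1:ℚ)^j = (-1:ℚ)^n := by rw [← pow_add, Nat.sub_add_cancel hjn]
      have hm : (-1/2:ℚ)^j = (-1:ℚ)^j * (1/2:ℚ)^j := by rw [← mul_pow]; norm_num
      have hjj : (-1:ℚ)^j * (-1:ℚ)^j = 1 := by
        rw [← pow_add, ← two_mul, pow_mul]
        norm_num
      rw [hm, ← hs1]
      linear_combination ((-1:ℚ)^(n-j) * (1/2:ℚ)^j) * hjj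
    have hrefl : (-1:ℚ)^(n-j) * gbinom x (n-j) = gbinom (((n:ℚ) - 1 - x) - j) (n-j) := by
      rw [gbinom_reflect x (n-j), Nat.cast_sub hjn]
      have harg : ((n:ℚ) - j) - 1 - x = ((n:ℚ) - 1 - x) - j := by ring
      rw [harg]
    calc (-1:ℚ)^n * ((-1/2:ℚ)^j * (((j+k-1).choose j):ℚ) * gbinom x (n-j))
        = ((-1:ℚ)^n * (-1/2:ℚ)^j) * (((j+k-1).choose j):ℚ) * gbinom x (n-j) := by ring
      _ = ((1/2:ℚ)^j * (-1:ℚ)^(n-j)) * (((j+k-1).choose j):ℚ) * gbinom x (n-j) := by rw [hsgn]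
      _ = (1/2:ℚ)^j * (((j+k-1).choose j):ℚ) * ((-1:ℚ)^(n-j) * gbinom x (n-j)) := by ring
      _ = _ := by rw [hrefl]
  rw [hL, masterlemma n k ((n:ℚ) - 1 - x)]
  -- now handle the right-hand side
  have e0 : ∀ m ∈ Finset.Icc 1 n, ((n-1).choose (n-m) : ℚ) * ChP2 k (-x) m / m.factorial
      = ((n-1).choose (n-m) : ℚ) * ∑ j ∈ range (m+1), (-1/2:ℚ)^j * ((j+k-1).choose j) * gbinom (-x + k) (m-j) := by
    intro m _
    rw [mul_div_assoc, hChP2 m]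
  rw [Finset.sum_congr rfl e0]
  have hext : ∑ m ∈ Finset.Icc 1 n, (((n-1).choose (n-m):ℚ)
        * ∑ j ∈ range (m+1), (-1/2:ℚ)^j * ((j+k-1).choose j) * gbinom (-x + k) (m-j))
      = ∑ m ∈ range (n+1), (((n-1).choose (n-m):ℚ)
        * ∑ j ∈ range (m+1), (-1/2:ℚ)^j * ((j+k-1).choose j) * gbinom (-x + k) (m-j)) := by
    have hset : Finset.Icc 1 n = (range (n+1)).erase 0 := by
      ext a
      simp only [Finset.mem_Icc, Finset.mem_erase, Finset.mem_range]
      omega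
    have h00 : (0:ℕ) ∈ range (n+1) := by simp
    rw [hset, ← Finset.add_sum_erase (range (n+1))
      (fun m => ((n-1).choose (n-m):ℚ)
        * ∑ j ∈ range (m+1), (-1/2:ℚ)^j * ((j+k-1).choose j) * gbinom (-x + k) (m-j)) h00]
    rw [Nat.sub_zero, Nat.choose_eq_zero_of_lt (by omega : n-1 < n)]
    push_cast
    ring
  rw [hext]
  have hswap : ∑ m ∈ range (n+1), (((n-1).choose (n-m):ℚ)
        * ∑ j ∈ range (m+1), (-1/2:ℚ)^j * ((j+k-1).choose j) * gbinom (-x + k) (m-j))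
      = ∑ j ∈ range (n+1), ∑ m ∈ Finset.Ico j (n+1),
          ((n-1).choose (n-m):ℚ) * ((-1/2:ℚ)^j * ((j+k-1).choose j) * gbinom (-x + k) (m-j)) := by
    simp only [Finset.mul_sum]
    refine Finset.sum_comm' (fun m j => ?_)
    simp only [mem_range, Finset.mem_Ico]
    omega
  rw [hswap]
  refine (Finset.sum_congr rfl (fun j hj => ?_)).symm
  rw [mem_range] at hj
  have hjn : j ≤ n := by omega
  rw [Finset.sum_Ico_eq_sum_range]
  have hNj : n + 1 - j = (n - j) + 1 := by omega
  rw [hNj]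
  have hterm : ∀ i ∈ range ((n-j)+1),
      ((n-1).choose (n-(j+i)):ℚ) * ((-1/2:ℚ)^j * ((j+k-1).choose j) * gbinom (-x + k) ((j+i)-j))
      = (-1/2:ℚ)^j * ((j+k-1).choose j) * (((n-1).choose ((n-j)-i):ℚ) * gbinom (-x + k) i) := by
    intro i hi
    have e1 : (j+i) - j = i := by omega
    have e2 : n - (j+i) = (n-j) - i := by omega
    rw [e1, e2]
    ring
  rw [Finset.sum_congr rfl hterm, ← Finset.mul_sum]
  have hvdm : ∑ i ∈ range ((n-j)+1), (((n-1).choose ((n-j)-i):ℚ) * gbinom (-x + k) i)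
      = gbinom (((n-1:ℕ):ℚ) + (-x + k)) (n-j) := by
    rw [gbinom_vandermonde ((n-1:ℕ):ℚ) (-x + k) (n-j),
      ← Finset.sum_range_reflect (fun s => gbinom ((n-1:ℕ):ℚ) s * gbinom (-x + (k:ℚ)) ((n-j) - s)) ((n-j)+1)]
    refine Finset.sum_congr rfl (fun i hi => ?_)
    rw [mem_range] at hi
    have e3 : (n-j) + 1 - 1 - i = (n-j) - i := by omega
    have e4 : (n-j) - ((n-j) - i) = i := by omega
    rw [e3, e4, gbinom_nat (n-1) ((n-j)-i)]
  rw [hvdm]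
  have e5 : ((n-1:ℕ):ℚ) + (-x + k) = (n:ℚ) - 1 - x + k := by
    rw [Nat.cast_sub hn1]
    push_cast
    ring
  rw [e5]
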